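/- Let S_n^B be a sum of independent Bernoulli random variables with parameters 1/(2k) for k = 1,…,n. Then P[S_n^B = k] = B(n,k)/(2^n n!) for all k ∈ {0,1,…,n}, where B(n,k) are the B-analogues of the Stirling numbers of the first kind. -/

import Mathlib

open MeasureTheory ProbabilityTheory
open scoped ENNReal

/-- The B-analogue Stirling numbers, defined by the recurrence
`B(n+1,k) = B(n,k−1) + (2n+1)·B(n,k)` with `B(0,0) = 1`
(equivalently, coefficients of `(t+1)(t+3)⋯(t+2n−1)`). -/
def stirlingB : ℕ → ℕ → ℕ
  | 0, 0 => 1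
  | 0, _ + 1 => 0
  | n + 1, 0 => (2 * n + 1) * stirlingB n 0
  | n + 1, k + 1 => stirlingB n k + (2 * n + 1) * stirlingB n (k + 1)


lemma aux_precomp {Ω : Type*} [MeasurableSpace Ω] {μ : Measure Ω} {ι ι' : Type*}
    {f : ι → Ω → ℕ} (hf : iIndepFun f μ)
    {g : ι' → ι} (hg : Function.Injective g) :
    iIndepFun (fun j => f (g j)) μ := by
  classical
  rw [iIndepFun_iff_measure_inter_preimage_eq_mul] at hf ⊢
  intro S sets hsets
  have h1 : ∀ j, Function.extend g sets (fun _ => Set.univ) (g j) = sets j :=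
    fun j => hg.extend_apply _ _ _
  have key := hf (S.image g)
    (sets := Function.extend g sets fun _ => Set.univ) ?_
  · calc μ (⋂ i ∈ S, f (g i) ⁻¹' sets i)
        = μ (⋂ i ∈ S.image g, f i ⁻¹' Function.extend g sets (fun _ => Set.univ) i) := by
          congr 1
          ext ω
          simp only [Set.mem_iInter, Finset.mem_image]
          constructor
          · intro h i hi
            rcases hi with ⟨j, hj, rfl⟩
            rw [h1]; exact h j hj
          · intro h j hj
            have := h (g j) ⟨j, hj, rfl⟩
            rwa [h1] at this
      _ = ∏ i ∈ S.image g, μ (f i ⁻¹' Function.extend g sets (fun _ => Set.univ) i) := key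
      _ = ∏ j ∈ S, μ (f (g j) ⁻¹' sets j) := by
          rw [Finset.prod_image (fun a _ b _ h => hg h)]
          exact Finset.prod_congr rfl fun j hj => by rw [h1]
  · intro i hi
    rcases Finset.mem_image.mp hi with ⟨j, hj, rfl⟩
    rw [hg.extend_apply]
    exact hsets j hj

lemma aux_div_mul (a c b : ℕ) (d : ℝ≥0∞) (hb : b ≠ 0) (hd0 : d ≠ 0) (hdt : d ≠ ∞) :
    ((a : ℝ≥0∞) / b) * ((c : ℝ≥0∞) / d) = ((a * c : ℕ) : ℝ≥0∞) / ((b : ℝ≥0∞) * d) := by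
  rw [div_eq_mul_inv, div_eq_mul_inv, div_eq_mul_inv,
    ENNReal.mul_inv (Or.inr hdt) (Or.inr hd0)]
  push_cast
  ring

lemma aux_main : ∀ (n : ℕ) {Ω : Type*} [MeasurableSpace Ω] (μ : Measure Ω)
    [IsProbabilityMeasure μ]
    (X : Fin n → Ω → ℕ) (_ : ∀ i, Measurable (X i))
    (_ : iIndepFun X μ)
    (_ : ∀ i : Fin n, μ {ω | X i ω = 1} = 1 / (2 * ((i : ℕ) + 1) : ℝ≥0∞))
    (_ : ∀ i : Fin n, μ {ω | X i ω = 0} = 1 - 1 / (2 * ((i : ℕ) + 1) : ℝ≥0∞))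
    (k : ℕ),
    μ {ω | ∑ i, X i ω = k} =
      (stirlingB n k : ℝ≥0∞) / ((2 ^ n * n.factorial : ℕ) : ℝ≥0∞) := by
  intro n
  induction n with
  | zero =>
    intro Ω _ μ _ X hmeas hind hX1 hX0 k
    match k with
    | 0 => simp [stirlingB]
    | k + 1 =>
      have : {ω : Ω | ∑ i : Fin 0, X i ω = k + 1} = ∅ := by
        ext ω; simp
      rw [this]
      simp [stirlingB]
  | succ n ih =>
    intro Ω _ μ _ X hmeas hind hX1 hX0 k
    classical
    -- restricted family
    set Y : Fin n → Ω → ℕ := fun i => X i.castSucc with hY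
    set L : Ω → ℕ := X (Fin.last n) with hL
    have hYmeas : ∀ i, Measurable (Y i) := fun i => hmeas _
    have hYind : iIndepFun Y μ :=
      aux_precomp hind (Fin.castSucc_injective n)
    have hY1 : ∀ i : Fin n, μ {ω | Y i ω = 1} = 1 / (2 * ((i : ℕ) + 1) : ℝ≥0∞) := by
      intro i; have := hX1 i.castSucc; simpa using this
    have hY0 : ∀ i : Fin n, μ {ω | Y i ω = 0} = 1 - 1 / (2 * ((i : ℕ) + 1) : ℝ≥0∞) := by
      intro i; have := hX0 i.castSucc; simpa using this
    have IH := ih μ Y hYmeas hYind hY1 hY0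
    set S : Ω → ℕ := fun ω => ∑ i, Y i ω with hS
    have hSmeas : Measurable S := by
      apply Finset.measurable_sum
      exact fun i _ => hYmeas i
    have hLmeas : Measurable L := hmeas _
    have hsum : ∀ ω, ∑ i, X i ω = S ω + L ω := by
      intro ω
      rw [hS, Fin.sum_univ_castSucc (f := fun i => X i ω)]
    -- independence of S and L
    have hSL : IndepFun S L μ := by
      have hnm : Fin.last n ∉ (Finset.univ : Finset (Fin n)).map
          (Fin.castSuccEmb (n := n)) := by
        simp [Fin.castSuccEmb]
        intro i
        exact (Fin.castSucc_lt_last i).ne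
      have h := hind.indepFun_finset_sum_of_notMem hmeas hnm
      have hSeq : S = ∑ j ∈ (Finset.univ : Finset (Fin n)).map (Fin.castSuccEmb (n := n)), X j := by
        funext ω
        rw [hS]
        rw [Finset.sum_apply]
        rw [Finset.sum_map]
        rfl
      rwa [← hSeq] at h
    have key : ∀ j b : ℕ, μ ({ω | S ω = j} ∩ {ω | L ω = b}) =
        μ {ω | S ω = j} * μ {ω | L ω = b} := by
      intro j b
      exact hSL.measure_inter_preimage_eq_mul {j} {b}
        (measurableSet_singleton _) (measurableSet_singleton _)
    -- probabilities for L
    have hE0 : (2 * ((n : ℝ≥0∞) + 1)) ≠ 0 := by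
      refine mul_ne_zero (by norm_num) (by simp)
    have hEtop : (2 * ((n : ℝ≥0∞) + 1)) ≠ ∞ := by
      finiteness
    have hL1 : μ {ω | L ω = 1} = 1 / (2 * ((n : ℝ≥0∞) + 1)) := by
      have := hX1 (Fin.last n); simpa using this
    have hadd : ((2 * n + 1 : ℕ) : ℝ≥0∞) / (2 * ((n : ℝ≥0∞) + 1))
        + 1 / (2 * ((n : ℝ≥0∞) + 1)) = 1 := by
      rw [ENNReal.div_add_div_same]
      have : ((2 * n + 1 : ℕ) : ℝ≥0∞) + 1 = 2 * ((n : ℝ≥0∞) + 1) := by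
        push_cast; ring
      rw [this, ENNReal.div_self hE0 hEtop]
    have hL0 : μ {ω | L ω = 0} = ((2 * n + 1 : ℕ) : ℝ≥0∞) / (2 * ((n : ℝ≥0∞) + 1)) := by
      have h := hX0 (Fin.last n)
      simp only [Fin.val_last] at h
      rw [hL, h]
      exact (ENNReal.eq_sub_of_add_eq ((ENNReal.div_lt_top (by norm_num) hE0).ne) hadd).symm
    -- L is a.s. in {0, 1}
    have hbig : μ {ω | 2 ≤ L ω} = 0 := by
      have hdisj : Disjoint {ω : Ω | L ω = 0} {ω | L ω = 1} := by
        rw [Set.disjoint_left]; intro ω h0 h1; simp_all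
      have hmeas0 : MeasurableSet {ω : Ω | L ω = 0} := hLmeas (measurableSet_singleton 0)
      have hmeas1 : MeasurableSet {ω : Ω | L ω = 1} := hLmeas (measurableSet_singleton 1)
      have hunion : μ ({ω | L ω = 0} ∪ {ω | L ω = 1}) = 1 := by
        rw [measure_union hdisj hmeas1, hL0, hL1, hadd]
      have hcompl : μ ({ω | L ω = 0} ∪ {ω | L ω = 1})ᶜ = 0 := by
        rw [measure_compl (hmeas0.union hmeas1) (by finiteness), hunion,
          measure_univ, tsub_self]
      refine measure_mono_null ?_ hcompl
      intro ω hω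
      simp only [Set.mem_setOf_eq] at hω
      simp only [Set.mem_compl_iff, Set.mem_union, Set.mem_setOf_eq]
      omega
    have hD0 : ((2 ^ n * n.factorial : ℕ) : ℝ≥0∞) ≠ 0 := by
      simp [Nat.factorial_ne_zero]
    have hDcast : ((2 ^ n * n.factorial : ℕ) : ℝ≥0∞) * (2 * ((n : ℝ≥0∞) + 1))
        = ((2 ^ (n + 1) * (n + 1).factorial : ℕ) : ℝ≥0∞) := by
      rw [Nat.factorial_succ]
      push_cast
      ring
    have hmS : ∀ j : ℕ, MeasurableSet {ω | S ω = j} :=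
      fun j => hSmeas (measurableSet_singleton j)
    have hmL : ∀ b : ℕ, MeasurableSet {ω | L ω = b} :=
      fun b => hLmeas (measurableSet_singleton b)
    match k with
    | 0 =>
      have hev : {ω : Ω | ∑ i, X i ω = 0} = {ω | S ω = 0} ∩ {ω | L ω = 0} := by
        ext ω
        simp only [Set.mem_setOf_eq, Set.mem_inter_iff, hsum ω]
        omega
      rw [hev, key, IH 0, hL0,
        aux_div_mul _ _ _ _ (by positivity) hE0 hEtop, hDcast]
      congr 2
      show stirlingB n 0 * (2 * n + 1) = (2 * n + 1) * stirlingB n 0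
      ring
    | m + 1 =>
      set A : Set Ω := {ω | S ω = m + 1} ∩ {ω | L ω = 0} with hA
      set B : Set Ω := {ω | S ω = m} ∩ {ω | L ω = 1} with hB
      have hmeasB : MeasurableSet B := (hmS m).inter (hmL 1)
      have hdisj : Disjoint A B := by
        rw [Set.disjoint_left]
        rintro ω ⟨_, h0⟩ ⟨_, h1⟩
        simp only [Set.mem_setOf_eq] at h0 h1
        omega
      have hsub1 : {ω : Ω | ∑ i, X i ω = m + 1} ⊆ (A ∪ B) ∪ {ω | 2 ≤ L ω} := by
        intro ω hω
        simp only [Set.mem_setOf_eq] at hω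
        rw [hsum ω] at hω
        simp only [Set.mem_union, hA, hB, Set.mem_inter_iff, Set.mem_setOf_eq]
        omega
      have hsub2 : A ∪ B ⊆ {ω : Ω | ∑ i, X i ω = m + 1} := by
        intro ω hω
        simp only [Set.mem_union, hA, hB, Set.mem_inter_iff, Set.mem_setOf_eq] at hω
        simp only [Set.mem_setOf_eq, hsum ω]
        omega
      have hsplit : μ {ω | ∑ i, X i ω = m + 1} = μ A + μ B := by
        apply le_antisymm
        · refine le_trans (measure_mono hsub1) ?_
          refine le_trans (measure_union_le _ _) ?_
          rw [hbig, add_zero]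
          exact measure_union_le _ _
        · rw [← measure_union hdisj hmeasB]
          exact measure_mono hsub2
      rw [hsplit, hA, hB, key, key, IH (m + 1), IH m, hL0, hL1,
        aux_div_mul _ _ _ _ (by positivity) hE0 hEtop]
      have h1 : (1 : ℝ≥0∞) / (2 * ((n : ℝ≥0∞) + 1)) = ((1 : ℕ) : ℝ≥0∞) / (2 * ((n : ℝ≥0∞) + 1)) := by
        norm_num
      rw [h1, aux_div_mul _ _ _ _ (by positivity) hE0 hEtop, hDcast,
        ENNReal.div_add_div_same]
      congr 1
      push_cast
      show ((stirlingB n (m + 1) : ℝ≥0∞)) * (2 * (n : ℝ≥0∞) + 1) + (stirlingB n m : ℝ≥0∞) * 1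
        = ((stirlingB n m + (2 * n + 1) * stirlingB n (m + 1) : ℕ) : ℝ≥0∞)
      push_cast
      ring

/-- If `S_n^B = X_1 + ⋯ + X_n` is a sum of independent Bernoulli random variables
with `P[X_i = 1] = 1/(2i)`, then `P[S_n^B = k] = B(n,k)/(2^n n!)` for `0 ≤ k ≤ n`. -/
theorem stmt_5 (n : ℕ) (hn : 1 ≤ n)
    {Ω : Type*} [MeasurableSpace Ω] (μ : Measure Ω) [IsProbabilityMeasure μ]
    (X : Fin n → Ω → ℕ) (hmeas : ∀ i, Measurable (X i))
    (hind : iIndepFun X μ)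
    (hX1 : ∀ i : Fin n, μ {ω | X i ω = 1} = 1 / (2 * ((i : ℕ) + 1) : ℝ≥0∞))
    (hX0 : ∀ i : Fin n, μ {ω | X i ω = 0} = 1 - 1 / (2 * ((i : ℕ) + 1) : ℝ≥0∞))
    (k : ℕ) (hk : k ≤ n) :
    μ {ω | ∑ i, X i ω = k} =
      (stirlingB n k : ℝ≥0∞) / ((2 ^ n * n.factorial : ℕ) : ℝ≥0∞) :=
  aux_main n μ X hmeas hind hX1 hX0 k
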